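/- arXiv:2001.03817 — 3 statements merged into one kernel-verified Lean document; each statement's English description precedes it below -/
import Mathlib

section
/- Let (M, 𝓔, g) be a sub-Riemannian manifold and let ∇ be a connection on TM compatible with the sub-Riemannian structure, with adjoint connection ∇̂ and associated covariant derivative D̂_t along curves. A curve γ : [0, t₁] → M is a normal geodesic if and only if there exists a one-form λ(t) along γ satisfying D̂_t λ = 0 and ♯λ(t) = γ̇(t) for all t. Furthermore, in that case λ(t) is an extremal of γ, i.e. λ(t) = e^{tH⃗}(λ(0)). -/
noncomputable section
open scoped RealInnerProductSpace
open Classical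

namespace SR

/-!
We work in a global trivialisation: the manifold is `ℝⁿ = EuclideanSpace ℝ (Fin n)`, all
tangent spaces are identified with `ℝⁿ`, and covectors are identified with vectors through
the Euclidean inner product (so that `p(v) = ⟪p, v⟫`).  The cotangent bundle `T*M` is
`ℝⁿ × ℝⁿ` with canonical symplectic coordinates.
-/

/-- The model space `ℝⁿ`. -/
abbrev V (n : ℕ) := EuclideanSpace ℝ (Fin n)

variable {n : ℕ}

/-- Lie bracket of vector fields (in the global chart). -/
def lieB {E : Type*} [NormedAddCommGroup E] [NormedSpace ℝ E] (X Y : E → E) : E → E :=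
  fun x => fderiv ℝ Y x (X x) - fderiv ℝ X x (Y x)

/-- A sub-Riemannian structure on `ℝⁿ`, recorded through its cometric
`♯ : T*M → TM` (a smooth family of symmetric positive semidefinite operators).
The horizontal bundle is `𝓔 = range ♯` and the metric `g` on `𝓔` is determined by
`⟨♯p, ♯q⟩_g = ⟪♯p, q⟫`. -/
structure SubRiemannian (n : ℕ) where
  sharp : V n → V n →L[ℝ] V n
  smooth : ContDiff ℝ (⊤ : ℕ∞) (fun x => sharp x)
  symm : ∀ x p q, ⟪sharp x p, q⟫ = ⟪p, sharp x q⟫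
  nonneg : ∀ x p, 0 ≤ ⟪sharp x p, p⟫

namespace SubRiemannian

variable (S : SubRiemannian n)

/-- The horizontal space `𝓔ₓ`. -/
def horiz (x : V n) : Submodule ℝ (V n) := LinearMap.range (S.sharp x : V n →ₗ[ℝ] V n)

/-- A smooth horizontal vector field. -/
def IsHorizField (X : V n → V n) : Prop :=
  ContDiff ℝ (⊤ : ℕ∞) X ∧ ∀ x, X x ∈ S.horiz x

/-- The flag of families of vector fields `𝓔¹ ⊆ 𝓔² ⊆ ⋯` generated by iterated brackets of
horizontal fields: `flagFields k` corresponds to `𝓔^{k+1}` of the paper. -/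
def flagFields : ℕ → Set (V n → V n)
  | 0 => {X | S.IsHorizField X}
  | (k+1) => flagFields k ∪ {Z | ∃ X Y, S.IsHorizField X ∧ Y ∈ flagFields k ∧ Z = lieB X Y}

/-- `𝓔^k_x` (for `k ≥ 1`). -/
def growth (k : ℕ) (x : V n) : Submodule ℝ (V n) :=
  Submodule.span ℝ {v | ∃ X ∈ S.flagFields (k - 1), X x = v}

/-- The distribution is bracket-generating. -/
def BracketGenerating : Prop := ∀ x, ∃ k, S.growth k x = ⊤

/-- The annihilator `Ann(𝓔)ₓ` of the horizontal space (as a set of covectors). -/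
def ann (x : V n) : Set (V n) := {p | S.sharp x p = 0}

/-- The sub-Riemannian inner product on the horizontal space: for `v = ♯p ∈ 𝓔ₓ` and
`w ∈ 𝓔ₓ`, `⟨v, w⟩_g = ⟪p, w⟫` (independent of the choice of `p`). -/
def gInner (x v w : V n) : ℝ :=
  if h : ∃ p, S.sharp x p = v then ⟪Classical.choose h, w⟫ else 0

/-- The sub-Riemannian norm of a horizontal vector. -/
def gNorm (x v : V n) : ℝ := Real.sqrt (S.gInner x v v)

/-- The sub-Riemannian Hamiltonian `H(p) = ½|p|²_{g*}`. -/
def ham (x p : V n) : ℝ := ⟪S.sharp x p, p⟫ / 2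

/-- The Hamiltonian vector field of `H` on `T*M = ℝⁿ × ℝⁿ` in canonical coordinates:
`ẋ = ∂H/∂p = ♯p`, `ṗ = −∂H/∂x`. -/
def hamVF (z : V n × V n) : V n × V n :=
  (S.sharp z.1 z.2, -gradient (fun y => S.ham y z.2) z.1)

/-- `(γ, λ)` satisfies the Hamiltonian (normal extremal) equations on `I`. -/
def IsExtremalOn (γ pp : ℝ → V n) (I : Set ℝ) : Prop :=
  ∀ t ∈ I, HasDerivAt γ (S.sharp (γ t) (pp t)) t ∧
    HasDerivAt pp (-gradient (fun y => S.ham y (pp t)) (γ t)) t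

/-- `γ` is a normal geodesic on `I`. -/
def IsNormalGeodesicOn (γ : ℝ → V n) (I : Set ℝ) : Prop :=
  ∃ pp, S.IsExtremalOn γ pp I

end SubRiemannian

/-- An affine connection on `TM`, recorded through its Christoffel symbols in the global
trivialisation: `∇_X Y = dY(X) + Γ(X, Y)`. -/
structure Connection (n : ℕ) where
  Γ : V n → V n →L[ℝ] V n →L[ℝ] V n

namespace Connection

variable (C : Connection n)

/-- Covariant derivative of the vector field `Y` at `x` in the direction `u`. -/
def covAt (x u : V n) (Y : V n → V n) : V n := fderiv ℝ Y x u + C.Γ x u (Y x)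

/-- Covariant derivative `∇_X Y`. -/
def cov (X Y : V n → V n) : V n → V n := fun x => C.covAt x (X x) Y

/-- The torsion `T(u,v)`. -/
def tor (x u v : V n) : V n := C.Γ x u v - C.Γ x v u

/-- The torsion as an operator in its second argument, `T_u = T(u, ·)`. -/
def torCLM (x u : V n) : V n →L[ℝ] V n := C.Γ x u - (C.Γ x).flip u

/-- The curvature operator `R(u,v) : TM → TM`. -/
def curvCLM (x u v : V n) : V n →L[ℝ] V n :=
  (fderiv ℝ C.Γ x u) v - (fderiv ℝ C.Γ x v) u
    + (C.Γ x u).comp (C.Γ x v) - (C.Γ x v).comp (C.Γ x u)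

/-- The curvature `R(u,v)w`. -/
def curv (x u v w : V n) : V n := C.curvCLM x u v w

/-- The adjoint connection `∇̂_X Y = ∇_X Y − T(X,Y)`; its Christoffel symbol is the flip of
`Γ`. -/
def adj : Connection n := ⟨fun x => (C.Γ x).flip⟩

/-- The covariant derivative `(∇_u T)(v,w)` of the torsion. -/
def covTor (x u v w : V n) : V n :=
  fderiv ℝ (fun y => C.tor y v w) x u + C.Γ x u (C.tor x v w)
    - C.tor x (C.Γ x u v) w - C.tor x v (C.Γ x u w)

/-- Covariant derivative of a vector field `Z` along a curve `γ`. -/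
def covAlong (γ Z : ℝ → V n) (t : ℝ) : V n := deriv Z t + C.Γ (γ t) (deriv γ t) (Z t)

/-- Covariant derivative of a one-form (identified with a vector field) along a curve. -/
def covFormAlong (γ p : ℝ → V n) (t : ℝ) : V n :=
  deriv p t - ContinuousLinearMap.adjoint (C.Γ (γ t) (deriv γ t)) (p t)

/-- Covariant derivative of a covector field. -/
def covFormAt (x u : V n) (β : V n → V n) : V n :=
  fderiv ℝ β x u - ContinuousLinearMap.adjoint (C.Γ x u) (β x)

/-- Horizontal lift (with respect to `C`) of the vector `v` at the covector `z = (x,p)`: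
the second component records the motion of a `C`-parallel covector. -/
def hlift (z : V n × V n) (v : V n) : V n × V n :=
  (v, ContinuousLinearMap.adjoint (C.Γ z.1 v) z.2)

/-- Covariant derivative along `γ` of a symmetric two-tensor (recorded as an operator
family) with respect to `C`. -/
def covSymAlong (γ : ℝ → V n) (Ss : ℝ → V n →L[ℝ] V n) (t : ℝ) : V n →L[ℝ] V n :=
  deriv Ss t - (Ss t).comp (C.Γ (γ t) (deriv γ t))
    - (ContinuousLinearMap.adjoint (C.Γ (γ t) (deriv γ t))).comp (Ss t)

end Connection

/-- The connection `C` is compatible with the sub-Riemannian structure: `∇♯ = ♯∇`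
(equivalently `∇g* = 0`, equivalently `𝓔` is parallel and `g` is preserved). -/
def Compatible (S : SubRiemannian n) (C : Connection n) : Prop :=
  ∀ x u p, (fderiv ℝ (fun y => S.sharp y) x u) p + C.Γ x u (S.sharp x p)
      + S.sharp x (ContinuousLinearMap.adjoint (C.Γ x u) p) = 0

namespace SubRiemannian

variable (S : SubRiemannian n) (C : Connection n)

/-- The operator `∂⃗ = (π*∇)_{H⃗}` acting on sections of `π* End TM` (recorded as plain
maps `T*M → (TM → TM)`). -/
def dEnd (F : V n × V n → V n → V n) (z : V n × V n) (u : V n) : V n :=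
  fderiv ℝ (fun w => F w u) z (S.hamVF z)
    + C.Γ z.1 (S.sharp z.1 z.2) (F z u) - F z (C.Γ z.1 (S.sharp z.1 z.2) u)

/-- The first twist polynomial `P₁|_p = −T(♯p, ·)`. -/
def P1f (z : V n × V n) (u : V n) : V n := -C.tor z.1 (S.sharp z.1 z.2) u

/-- The twist polynomials `P₀ = id`, `P_{k+1} = ∂⃗P_k + P₁ P_k`. -/
def twistP : ℕ → V n × V n → V n → V n
  | 0 => fun _ u => u
  | (k+1) => fun z u => S.dEnd C (twistP k) z u + S.P1f C z (twistP k z u)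

/-- The flag `𝔈^i_p = span{P_j|_p v : v ∈ 𝓔, 0 ≤ j ≤ i−1}`. -/
def twistFlag (i : ℕ) (z : V n × V n) : Submodule ℝ (V n) :=
  Submodule.span ℝ {v | ∃ j < i, ∃ u ∈ S.horiz z.1, S.twistP C j z u = v}

/-- `rank 𝔈^i_p`. -/
def twistRank (i : ℕ) (z : V n × V n) : ℕ := Module.finrank ℝ (S.twistFlag C i z)

/-- Ampleness at time `t` of the extremal `lam`, expressed through the twist flag. -/
def TwAmpleAt (lam : ℝ → V n × V n) (t : ℝ) : Prop := ∃ i, S.twistFlag C i (lam t) = ⊤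

/-- Equiregularity of the extremal `lam`, expressed through the twist flag. -/
def TwEquireg (lam : ℝ → V n × V n) : Prop :=
  ∀ i t t', S.twistRank C i (lam t) = S.twistRank C i (lam t')

/-- The tensor `A_p(v,w) = ½ p(T(v,w))`, contracted as `A♯(v) = ♯ A_p(v, ·)`. -/
def AfP (z : V n × V n) (v : V n) : V n :=
  (1/2 : ℝ) • S.sharp z.1 (ContinuousLinearMap.adjoint (C.torCLM z.1 v) z.2)

/-- `S♯(v) = ♯ S(v, ·)` for a symmetric two-tensor family `Ss` along a curve `γ`. -/
def Sf (Ss : ℝ → V n →L[ℝ] V n) (γ : ℝ → V n) (t : ℝ) (v : V n) : V n :=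
  S.sharp (γ t) (Ss t v)

/-- `D_t^S X = D̂_t X + A♯_λ(X) + S♯(X)` on vector fields along a geodesic `γ` with
extremal covector `pp`. -/
def DS (Ss : ℝ → V n →L[ℝ] V n) (γ pp : ℝ → V n) (X : ℝ → V n) (t : ℝ) : V n :=
  C.adj.covAlong γ X t + S.AfP C (γ t, pp t) (X t) + S.Sf Ss γ t (X t)

/-- `D_t^S α = D̂_t α + A_λ(♯α) − S(♯α)` on one-forms along the geodesic. -/
def DSform (Ss : ℝ → V n →L[ℝ] V n) (γ pp : ℝ → V n) (α : ℝ → V n) (t : ℝ) : V n :=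
  C.adj.covFormAlong γ α t
    + (1/2 : ℝ) • ContinuousLinearMap.adjoint (C.torCLM (γ t) (S.sharp (γ t) (α t))) (pp t)
    - Ss t (S.sharp (γ t) (α t))

/-- The quadratic form `𝔯^S_γ(X,X) = λ R(γ̇,X)X + λ(∇_X T)(γ̇,X) + |S♯X + A♯X|²_g −
(D̂_t S)(X,X)` of the canonical curvature. -/
def frakQ (Ss : ℝ → V n →L[ℝ] V n) (γ pp : ℝ → V n) (t : ℝ) (v : V n) : ℝ :=
  ⟪pp t, C.curv (γ t) (deriv γ t) v v⟫
  + ⟪pp t, C.covTor (γ t) v (deriv γ t) v⟫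
  + S.gInner (γ t) (S.Sf Ss γ t v + S.AfP C (γ t, pp t) v) (S.Sf Ss γ t v + S.AfP C (γ t, pp t) v)
  - ⟪C.adj.covSymAlong γ Ss t v, v⟫

/-- The symmetric bilinear form `𝔯^S_γ` obtained from `frakQ` by polarisation. -/
def frakB (Ss : ℝ → V n →L[ℝ] V n) (γ pp : ℝ → V n) (t : ℝ) (v w : V n) : ℝ :=
  (S.frakQ C Ss γ pp t (v + w) - S.frakQ C Ss γ pp t v - S.frakQ C Ss γ pp t w) / 2

end SubRiemannian

/-- Length of the `b`-th row of the Young diagram `𝕐(d 1, …, d s)`. -/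
def rowLen (d : ℕ → ℕ) (s a : ℕ) : ℕ := ((Finset.Icc 1 s).filter fun b => a ≤ d b).card

end SR

namespace SR

/-- The inner product of the gradient of the Hamiltonian (in the base variable) with a
direction `u` is given by the derivative of the cometric. -/
lemma inner_grad_ham {n : ℕ} (S : SubRiemannian n) (x p u : V n) :
    ⟪gradient (fun y => S.ham y p) x, u⟫
      = ⟪(fderiv ℝ (fun y => S.sharp y) x u) p, p⟫ / 2 := by
  classical
  set Φ : V n → (V n →L[ℝ] V n) := fun y => S.sharp y with hΦdef
  set D : V n →L[ℝ] (V n →L[ℝ] V n) := fderiv ℝ Φ x with hD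
  have hΦ : HasFDerivAt Φ D x :=
    ((S.smooth.differentiable (by simp)) x).hasFDerivAt
  set L : (V n →L[ℝ] V n) →L[ℝ] ℝ :=
    (1/2 : ℝ) • ((innerSL ℝ p).comp (ContinuousLinearMap.apply ℝ (V n) p)) with hL
  have hcomp' : HasFDerivAt (fun y => L (Φ y)) (L.comp D) x :=
    (L.hasFDerivAt).comp x hΦ
  have hfe : (fun y => S.ham y p) = fun y => L (Φ y) := by
    funext y
    simp only [SubRiemannian.ham, hL, ContinuousLinearMap.smul_apply,
      ContinuousLinearMap.comp_apply,
      ContinuousLinearMap.apply_apply, innerSL_apply_apply, smul_eq_mul]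
    rw [real_inner_comm]
    ring
  have hf : HasFDerivAt (fun y => S.ham y p) (L.comp D) x := by
    rw [hfe]; exact hcomp'
  have hgrad : gradient (fun y => S.ham y p) x
      = (InnerProductSpace.toDual ℝ (V n)).symm (L.comp D) := by
    rw [gradient, hf.fderiv]
  rw [hgrad, InnerProductSpace.toDual_symm_apply]
  simp only [hL, ContinuousLinearMap.comp_apply, ContinuousLinearMap.smul_apply,
    ContinuousLinearMap.apply_apply, innerSL_apply_apply, smul_eq_mul]
  rw [real_inner_comm]
  ring

/-- Under compatibility, the base-gradient of the Hamiltonian is minus the adjoint of the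
adjoint-connection Christoffel symbol applied to the covector. -/
lemma grad_ham_eq {n : ℕ} (S : SubRiemannian n) (C : Connection n)
    (hcomp : Compatible S C) (x p : V n) :
    gradient (fun y => S.ham y p) x
      = - ContinuousLinearMap.adjoint (C.adj.Γ x (S.sharp x p)) p := by
  apply ext_inner_right ℝ
  intro u
  rw [inner_grad_ham S x p u]
  have hc := hcomp x u p
  have h1 : (fderiv ℝ (fun y => S.sharp y) x u) p
      = - C.Γ x u (S.sharp x p) - S.sharp x (ContinuousLinearMap.adjoint (C.Γ x u) p) := by
    linear_combination (norm := module) hc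
  rw [h1]
  have h2 : ⟪S.sharp x (ContinuousLinearMap.adjoint (C.Γ x u) p), p⟫
      = ⟪C.Γ x u (S.sharp x p), p⟫ := by
    rw [S.symm, real_inner_comm, ContinuousLinearMap.adjoint_inner_right]
  have h3 : ⟪-ContinuousLinearMap.adjoint (C.adj.Γ x (S.sharp x p)) p, u⟫
      = - ⟪C.Γ x u (S.sharp x p), p⟫ := by
    rw [inner_neg_left, ContinuousLinearMap.adjoint_inner_left]
    simp only [Connection.adj, ContinuousLinearMap.flip_apply]
    rw [real_inner_comm]
  rw [h3, inner_sub_left, inner_neg_left, h2]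
  ring

/-- A parallel coform realising the velocity produces a normal extremal. -/
lemma coform_extremal {n : ℕ} (S : SubRiemannian n) (C : Connection n)
    (hcomp : Compatible S C) (t₁ : ℝ) (γ lam : ℝ → V n)
    (hdiff : ∀ t ∈ Set.Icc 0 t₁, DifferentiableAt ℝ γ t ∧ DifferentiableAt ℝ lam t)
    (heq : ∀ t ∈ Set.Icc 0 t₁,
      C.adj.covFormAlong γ lam t = 0 ∧ S.sharp (γ t) (lam t) = deriv γ t) :
    S.IsExtremalOn γ lam (Set.Icc 0 t₁) := by
  intro t ht
  obtain ⟨hγ, hlam⟩ := hdiff t ht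
  obtain ⟨hcov, hsharp⟩ := heq t ht
  refine ⟨?_, ?_⟩
  · rw [hsharp]; exact hγ.hasDerivAt
  · have hd : deriv lam t
        = ContinuousLinearMap.adjoint (C.adj.Γ (γ t) (deriv γ t)) (lam t) := by
      have := hcov
      rw [Connection.covFormAlong, sub_eq_zero] at this
      exact this
    have : HasDerivAt lam (deriv lam t) t := hlam.hasDerivAt
    rw [hd, ← hsharp] at this
    rw [grad_ham_eq S C hcomp, neg_neg]
    exact this

/-!
STATEMENT 1.  Let `(M, 𝓔, g)` be a sub-Riemannian manifold and `∇` a compatible connection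
with adjoint `∇̂`.  A curve `γ : [0,t₁] → M` is a normal geodesic iff there is a one-form
`λ(t)` along `γ` with `D̂_t λ = 0` and `♯λ(t) = γ̇(t)`; moreover such a `λ` is an extremal
of `γ`.
-/
theorem normal_geodesic_iff_parallel_coform
    {n : ℕ} (S : SubRiemannian n) (hbg : S.BracketGenerating)
    (C : Connection n) (hC : ContDiff ℝ (⊤ : ℕ∞) C.Γ) (hcomp : Compatible S C)
    (t₁ : ℝ) (ht₁ : 0 ≤ t₁) (γ : ℝ → V n) :
    (S.IsNormalGeodesicOn γ (Set.Icc 0 t₁) ↔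
      ∃ lam : ℝ → V n, (∀ t ∈ Set.Icc 0 t₁, DifferentiableAt ℝ γ t ∧ DifferentiableAt ℝ lam t) ∧
        ∀ t ∈ Set.Icc 0 t₁,
          C.adj.covFormAlong γ lam t = 0 ∧ S.sharp (γ t) (lam t) = deriv γ t) ∧
    (∀ lam : ℝ → V n,
      (∀ t ∈ Set.Icc 0 t₁, DifferentiableAt ℝ γ t ∧ DifferentiableAt ℝ lam t) →
      (∀ t ∈ Set.Icc 0 t₁,
          C.adj.covFormAlong γ lam t = 0 ∧ S.sharp (γ t) (lam t) = deriv γ t) →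
      S.IsExtremalOn γ lam (Set.Icc 0 t₁)) := by
  constructor
  · constructor
    · rintro ⟨pp, hpp⟩
      refine ⟨pp, fun t ht => ⟨(hpp t ht).1.differentiableAt, (hpp t ht).2.differentiableAt⟩,
        fun t ht => ?_⟩
      have h1 := (hpp t ht).1
      have h2 := (hpp t ht).2
      have hγd : deriv γ t = S.sharp (γ t) (pp t) := h1.deriv
      refine ⟨?_, hγd.symm⟩
      rw [Connection.covFormAlong, h2.deriv, hγd, grad_ham_eq S C hcomp, neg_neg, sub_self]
    · rintro ⟨lam, hdiff, heq⟩
      exact ⟨lam, coform_extremal S C hcomp t₁ γ lam hdiff heq⟩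
  · exact fun lam hdiff heq => coform_extremal S C hcomp t₁ γ lam hdiff heq

end SR
end
end

section
/- Let (W, ω) be a symplectic vector space and Λ(t) a smooth curve in the Lagrangian Grassmannian L(W). If Λ(t) is equiregular of step s, then for every j = 1, …, s−1 one has d_j ≥ d_{j+1}, where d_j = k_j − k_{j−1} and k_i(t) = dim Λ^{(i)}(t). -/
noncomputable section

namespace LG

variable {W : Type*} [NormedAddCommGroup W] [NormedSpace ℝ W]

/-- The `i`-th extension `Λ^{(i)}(t)` of a curve of subspaces: the span of all derivatives of
order `≤ i` at `t` of smooth curves `z` with `z(s) ∈ Λ(s)` for all `s`. -/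
def ext (Λ : ℝ → Submodule ℝ W) (i : ℕ) (t : ℝ) : Submodule ℝ W :=
  Submodule.span ℝ
    {v | ∃ (z : ℝ → W) (j : ℕ), j ≤ i ∧ ContDiff ℝ (⊤ : ℕ∞) z ∧ (∀ s, z s ∈ Λ s) ∧
      iteratedDeriv j z t = v}

/-- `k_i(t) = dim Λ^{(i)}(t)`. -/
def kdim (Λ : ℝ → Submodule ℝ W) (i : ℕ) (t : ℝ) : ℕ := Module.finrank ℝ (ext Λ i t)

/-- A subspace is Lagrangian when it coincides with its symplectic complement. -/
def IsLagrangian (ω : W →ₗ[ℝ] W →ₗ[ℝ] ℝ) (L : Submodule ℝ W) : Prop :=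
  ∀ v, v ∈ L ↔ ∀ w ∈ L, ω v w = 0

/-- A smooth curve of subspaces: through every point of every fibre there passes a smooth
global section. -/
def IsSmoothCurve (Λ : ℝ → Submodule ℝ W) : Prop :=
  ∀ t v, v ∈ Λ t → ∃ z : ℝ → W, ContDiff ℝ (⊤ : ℕ∞) z ∧ (∀ s, z s ∈ Λ s) ∧ z t = v

/-- Equiregular: each `k_i` is constant. -/
def Equiregular (Λ : ℝ → Submodule ℝ W) : Prop := ∀ i t t', kdim Λ i t = kdim Λ i t'

/-- `s` is the step of the curve: the minimal `i` such that `Λ^{(j)} = Λ^{(i)}` for all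
`j ≥ i`. -/
def IsStep (Λ : ℝ → Submodule ℝ W) (s : ℕ) : Prop :=
  (∀ t j, s ≤ j → ext Λ j t = ext Λ s t) ∧
    ∀ s', (∀ t j, s' ≤ j → ext Λ j t = ext Λ s' t) → s ≤ s'

/-! ### Auxiliary lemmas -/

open Module Submodule Set

/-- The generating set of `ext`. -/
def gset (Λ : ℝ → Submodule ℝ W) (i : ℕ) (t : ℝ) : Set W :=
  {v | ∃ (z : ℝ → W) (j : ℕ), j ≤ i ∧ ContDiff ℝ (⊤ : ℕ∞) z ∧ (∀ s, z s ∈ Λ s) ∧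
      iteratedDeriv j z t = v}

lemma ext_eq_span (Λ : ℝ → Submodule ℝ W) (i : ℕ) (t : ℝ) :
    ext Λ i t = Submodule.span ℝ (gset Λ i t) := rfl

lemma contDiff_iteratedDeriv {z : ℝ → W} (hz : ContDiff ℝ (⊤ : ℕ∞) z) (a : ℕ) :
    ContDiff ℝ (⊤ : ℕ∞) (iteratedDeriv a z) := by
  rw [iteratedDeriv_eq_iterate]
  exact ContDiff.iterate_deriv a hz

lemma mem_ext {Λ : ℝ → Submodule ℝ W} {z : ℝ → W} (hz : ContDiff ℝ (⊤ : ℕ∞) z)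
    (hzm : ∀ s, z s ∈ Λ s) {a i : ℕ} (ha : a ≤ i) (t : ℝ) :
    iteratedDeriv a z t ∈ ext Λ i t :=
  Submodule.subset_span ⟨z, a, ha, hz, hzm, rfl⟩

lemma ext_mono (Λ : ℝ → Submodule ℝ W) {i i' : ℕ} (h : i ≤ i') (t : ℝ) :
    ext Λ i t ≤ ext Λ i' t :=
  Submodule.span_mono fun _ ⟨z, a, ha, h1, h2, h3⟩ => ⟨z, a, ha.trans h, h1, h2, h3⟩

lemma contDiff_finset_prod {ι : Type*} (s : Finset ι) (g : ι → ℝ → ℝ)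
    (h : ∀ i ∈ s, ContDiff ℝ (⊤ : ℕ∞) (g i)) :
    ContDiff ℝ (⊤ : ℕ∞) fun x => ∏ i ∈ s, g i x := by
  classical
  induction s using Finset.induction_on with
  | empty => simpa using contDiff_const
  | insert _ _ hx ih =>
      simp only [Finset.prod_insert hx]
      exact (h _ (Finset.mem_insert_self _ _)).mul
        (ih fun i hi => h i (Finset.mem_insert_of_mem hi))

lemma contDiff_matrix_det {ι : Type*} [Fintype ι] [DecidableEq ι]
    {A : ℝ → Matrix ι ι ℝ} (h : ∀ i j, ContDiff ℝ (⊤ : ℕ∞) fun s => A s i j) :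
    ContDiff ℝ (⊤ : ℕ∞) fun s => (A s).det := by
  simp only [Matrix.det_apply']
  exact ContDiff.sum fun σ _ => contDiff_const.mul (contDiff_finset_prod _ _ fun i _ => h _ _)

/-- Finite linearly independent spanning selection from a spanning set. -/
lemma exists_fin_span {V : Type*} [AddCommGroup V] [Module ℝ V] [FiniteDimensional ℝ V]
    (G : Set V) : ∃ (p : ℕ) (g : Fin p → V), (∀ k, g k ∈ G) ∧ LinearIndependent ℝ g ∧
      Submodule.span ℝ (Set.range g) = Submodule.span ℝ G := by
  classical
  obtain ⟨b, hbsub, hbspan, hbind⟩ := exists_linearIndependent ℝ G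
  have hfin : b.Finite := hbind.setFinite
  haveI := hfin.fintype
  refine ⟨Fintype.card b, fun i => ((Fintype.equivFin b).symm i : V), ?_, ?_, ?_⟩
  · intro k; exact hbsub ((Fintype.equivFin b).symm k).2
  · exact hbind.comp _ (Equiv.injective _)
  · have hr : (Set.range fun i => (((Fintype.equivFin b).symm i : b) : V)) = b := by
      rw [show (fun i => (((Fintype.equivFin b).symm i : b) : V))
            = Subtype.val ∘ (Fintype.equivFin b).symm from rfl, Set.range_comp,
        Equiv.range_eq_univ, Set.image_univ, Subtype.range_coe]
    rw [hr, hbspan]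

lemma finrank_map_mkQ_add [FiniteDimensional ℝ W] {K A : Submodule ℝ W} (h : K ≤ A) :
    finrank ℝ (A.map K.mkQ) + finrank ℝ K = finrank ℝ A := by
  have h1 : A.map K.mkQ = LinearMap.range (K.mkQ ∘ₗ A.subtype) := by
    rw [LinearMap.range_comp, Submodule.range_subtype]
  have h2 : LinearMap.ker (K.mkQ ∘ₗ A.subtype) = Submodule.comap A.subtype K := by
    rw [LinearMap.ker_comp, Submodule.ker_mkQ]
  have h3 := LinearMap.finrank_range_add_finrank_ker (K.mkQ ∘ₗ A.subtype)
  rw [h2, (Submodule.comapSubtypeEquivOfLe h).finrank_eq] at h3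
  rw [h1]
  exact h3

/-- **Key analytic lemma**: if a smooth curve `y` lies in a family `Γ` of subspaces of constant
dimension, spanned at `t₀` by smooth sections `u k`, then the derivative of `y` at `t₀` lies in
the span of the values and the derivatives of the `u k` at `t₀`. -/
lemma key [FiniteDimensional ℝ W] {ι : Type*} [Fintype ι]
    (Γ : ℝ → Submodule ℝ W) (t₀ : ℝ) (u : ι → ℝ → W)
    (hu_sm : ∀ k, ContDiff ℝ (⊤ : ℕ∞) (u k))
    (hu_mem : ∀ k s, u k s ∈ Γ s)
    (hspan : Γ t₀ ≤ Submodule.span ℝ (Set.range fun k => u k t₀))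
    (hdim : ∀ s, finrank ℝ (Γ s) = finrank ℝ (Γ t₀))
    (y : ℝ → W) (hy_sm : ContDiff ℝ (⊤ : ℕ∞) y) (hy : ∀ s, y s ∈ Γ s)
    (S : Submodule ℝ W) (hS1 : ∀ k, u k t₀ ∈ S) (hS2 : ∀ k, deriv (u k) t₀ ∈ S) :
    deriv y t₀ ∈ S := by
  classical
  -- select a basis of `Γ t₀` among the values `u k t₀`
  have hspan' : Submodule.span ℝ (Set.range fun k => u k t₀) = Γ t₀ := by
    refine le_antisymm (Submodule.span_le.2 ?_) hspan
    rintro v ⟨k, rfl⟩; exact hu_mem k t₀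
  obtain ⟨b, hbsub, hbspan, hbind⟩ :=
    exists_linearIndependent ℝ (Set.range fun k => u k t₀)
  rw [hspan'] at hbspan
  have hfin : b.Finite := hbind.setFinite
  haveI := hfin.fintype
  have hc : ∀ x : b, ∃ k, u k t₀ = (x : W) := fun x => hbsub x.2
  choose c hc using hc
  -- the sections realising the selected basis
  set v : b → ℝ → W := fun x => u (c x) with hv
  have hv0 : ∀ x : b, v x t₀ = (x : W) := fun x => hc x
  -- dual functionals
  set B := Basis.extend hbind with hB
  set f : b → (W →ₗ[ℝ] ℝ) :=
    fun x => B.coord ⟨(x : W), LinearIndepOn.subset_extend (show LinearIndepOn ℝ id b from hbind) (Set.subset_univ b) x.2⟩ with hf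
  have hfval : ∀ x x' : b, f x ((x' : W)) = if x' = x then 1 else 0 := by
    intro x x'
    have h1 : (x' : W) = B ⟨(x' : W), LinearIndepOn.subset_extend (show LinearIndepOn ℝ id b from hbind) (Set.subset_univ b) x'.2⟩ :=
      (Basis.extend_apply_self hbind
        ⟨(x' : W), LinearIndepOn.subset_extend (show LinearIndepOn ℝ id b from hbind) (Set.subset_univ b) x'.2⟩).symm
    rw [hf]
    conv_lhs => rw [h1]
    rw [Basis.coord_apply, Basis.repr_self, Finsupp.single_apply]
    simp [Subtype.ext_iff]
  -- smoothness of the matrix entries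
  have hfc : ∀ (x : b) (g : ℝ → W), ContDiff ℝ (⊤ : ℕ∞) g →
      ContDiff ℝ (⊤ : ℕ∞) fun s => f x (g s) := by
    intro x g hg
    have := (LinearMap.toContinuousLinearMap (f x)).contDiff.comp (𝕜 := ℝ) (n := (⊤ : ℕ∞)) hg
    simpa [Function.comp_def] using this
  set M : ℝ → Matrix b b ℝ := fun s => Matrix.of fun i k => f i (v k s) with hM
  have hM0 : M t₀ = 1 := by
    ext i k
    simp only [hM, Matrix.of_apply, Matrix.one_apply, hv0 k, hfval]
    by_cases h : k = i
    · simp [h]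
    · rw [if_neg h, if_neg fun h' => h h'.symm]
  set δ : ℝ → ℝ := fun s => (M s).det with hδ
  have hδsm : ContDiff ℝ (⊤ : ℕ∞) δ :=
    contDiff_matrix_det fun i k => hfc i _ (hu_sm (c k))
  have hδ0 : δ t₀ = 1 := by rw [hδ]; simp [hM0]
  have hU : ∀ᶠ s in nhds t₀, δ s ≠ 0 :=
    (hδsm.continuous.continuousAt).eventually_ne (by simp [hδ0])
  have hcard : Fintype.card b = finrank ℝ (Γ t₀) := by
    rw [← hbspan, finrank_span_set_eq_card hbind, Set.toFinset_card]
  -- wherever the determinant is nonzero, the `v x s` span `Γ s`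
  have hGs : ∀ s, δ s ≠ 0 → Submodule.span ℝ (Set.range fun x : b => v x s) = Γ s := by
    intro s hs
    have hind : LinearIndependent ℝ fun x : b => v x s := by
      rw [Fintype.linearIndependent_iff]
      intro g hg i
      have hmv : (M s).mulVec g = 0 := by
        funext i₀
        have := congrArg (f i₀) hg
        simpa [hM, Matrix.mulVec, dotProduct, map_sum, mul_comm] using this
      have := Matrix.eq_zero_of_mulVec_eq_zero hs hmv
      exact congrFun this i
    have hle : Submodule.span ℝ (Set.range fun x : b => v x s) ≤ Γ s := by
      refine Submodule.span_le.2 ?_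
      rintro w ⟨x, rfl⟩; exact hu_mem (c x) s
    refine Submodule.eq_of_le_of_finrank_le hle ?_
    rw [finrank_span_eq_card hind, hdim s, ← hcard]
  -- Cramer coefficients
  set β : ℝ → b → ℝ := fun s => (δ s)⁻¹ • Matrix.cramer (M s) (fun i => f i (y s)) with hβ
  have hrep : ∀ s, δ s ≠ 0 → y s = ∑ x : b, β s x • v x s := by
    intro s hs
    have hys : y s ∈ Submodule.span ℝ (Set.range fun x : b => v x s) := by
      rw [hGs s hs]; exact hy s
    obtain ⟨g, hg⟩ := (mem_span_range_iff_exists_fun ℝ).1 hys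
    have hfy : (fun i => f i (y s)) = (M s).mulVec g := by
      funext i₀
      rw [← hg]
      simp [hM, Matrix.mulVec, dotProduct, map_sum, mul_comm]
    have hunit : IsUnit (M s) := (Matrix.isUnit_iff_isUnit_det _).2 (isUnit_iff_ne_zero.2 hs)
    have hinj : Function.Injective (M s).mulVec := Matrix.mulVec_injective_iff_isUnit.2 hunit
    have hcram : Matrix.cramer (M s) ((M s).mulVec g) = δ s • g := by
      apply hinj
      rw [Matrix.mulVec_cramer, Matrix.mulVec_smul]
    have hβs : β s = g := by
      rw [hβ]
      simp only [hfy, hcram, smul_smul, inv_mul_cancel₀ hs, one_smul]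
    rw [hβs, ← hg]
  -- smoothness of the coefficients at t₀
  have hβsm : ∀ x : b, ContDiffAt ℝ (⊤ : ℕ∞) (fun s => β s x) t₀ := by
    intro x
    have h1 : ContDiffAt ℝ (⊤ : ℕ∞) (fun s => (δ s)⁻¹) t₀ :=
      (hδsm.contDiffAt).inv (by simp [hδ0])
    have h2 : ContDiff ℝ (⊤ : ℕ∞)
        (fun s => ((M s).updateCol x (fun i => f i (y s))).det) := by
      apply contDiff_matrix_det
      intro i k
      by_cases hk : k = x
      · simpa [Matrix.updateCol_apply, hk] using hfc i y hy_sm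
      · simpa [Matrix.updateCol_apply, hk, hM, hv] using hfc i _ (hu_sm (c k))
    have : (fun s => β s x) =
        fun s => (δ s)⁻¹ * ((M s).updateCol x (fun i => f i (y s))).det := by
      funext s
      rw [hβ]
      simp [Matrix.cramer_apply, smul_eq_mul]
    rw [this]
    exact h1.mul h2.contDiffAt
  -- conclusion
  have hEq : y =ᶠ[nhds t₀] fun s => ∑ x : b, β s x • v x s :=
    hU.mono fun s hs => hrep s hs
  have hderiv : HasDerivAt (fun s => ∑ x : b, β s x • v x s)
      (∑ x : b, (β t₀ x • deriv (v x) t₀ + deriv (fun s => β s x) t₀ • v x t₀)) t₀ := by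
    apply HasDerivAt.fun_sum
    intro x _
    exact (((hβsm x).differentiableAt (by simp)).hasDerivAt).smul
      (((hu_sm (c x)).differentiable (by simp) t₀).hasDerivAt)
  have : deriv y t₀ = ∑ x : b, (β t₀ x • deriv (v x) t₀ + deriv (fun s => β s x) t₀ • v x t₀) := by
    rw [hEq.deriv_eq, hderiv.deriv]
  rw [this]
  refine Submodule.sum_mem _ fun x _ => Submodule.add_mem _ ?_ ?_
  · exact Submodule.smul_mem _ _ (hS2 (c x))
  · exact Submodule.smul_mem _ _ (hS1 (c x))

/-- **Lemma 4.2** (`lemma:FStructure`): for an equiregular smooth curve of Lagrangian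
subspaces of step `s`, the increments `d_j = k_j − k_{j−1}` are non-increasing for
`j = 1, …, s − 1`. -/
theorem dim_increments_antitone [FiniteDimensional ℝ W]
    (ω : W →ₗ[ℝ] W →ₗ[ℝ] ℝ)
    (halt : ∀ v, ω v v = 0)
    (hnondeg : ∀ v, (∀ w, ω v w = 0) → v = 0)
    (Λ : ℝ → Submodule ℝ W)
    (hsm : IsSmoothCurve Λ)
    (hlag : ∀ t, IsLagrangian ω (Λ t))
    (s : ℕ) (hstep : IsStep Λ s)
    (hequi : Equiregular Λ) :
    ∀ (t : ℝ) (j : ℕ), 1 ≤ j → j ≤ s - 1 →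
      (kdim Λ (j+1) t : ℤ) - (kdim Λ j t : ℤ) ≤ (kdim Λ j t : ℤ) - (kdim Λ (j-1) t : ℤ) := by
  intro t j hj1 _
  classical
  set K := ext Λ (j-1) t with hK
  set A := ext Λ j t with hA
  have hKA : K ≤ A := ext_mono Λ (Nat.sub_le j 1) t
  set π := K.mkQ with hπ
  -- select generators of A modulo K
  obtain ⟨m, q, hqG, hqind, hqspan⟩ := exists_fin_span (π '' gset Λ j t)
  have hqmap : Submodule.span ℝ (Set.range q) = A.map π := by
    rw [hqspan, ← Submodule.map_span, ← ext_eq_span]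
  -- preimages of the selected generators
  have hpre : ∀ k, ∃ (zz : ℝ → W) (aa : ℕ), aa ≤ j ∧ ContDiff ℝ (⊤ : ℕ∞) zz ∧
      (∀ s', zz s' ∈ Λ s') ∧ π (iteratedDeriv aa zz t) = q k := by
    intro k
    obtain ⟨x, ⟨zz, aa, h1, h2, h3, h4⟩, h5⟩ := hqG k
    exact ⟨zz, aa, h1, h2, h3, by rw [h4, h5]⟩
  choose z a haj hzsm hzmem hzπ using hpre
  -- the count m
  have hmcount : m + kdim Λ (j-1) t = kdim Λ j t := by
    have h1 : finrank ℝ (Submodule.span ℝ (Set.range q)) = m := by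
      rw [finrank_span_eq_card hqind, Fintype.card_fin]
    have h2 := finrank_map_mkQ_add hKA
    rw [hqmap] at h1
    rw [kdim, kdim, ← hA, ← hK, ← h2, h1]
  -- generators of K
  obtain ⟨p, w, hwG, -, hwspan⟩ := exists_fin_span (gset Λ (j-1) t)
  have hwmap : Submodule.span ℝ (Set.range w) = K := by rw [hwspan, ← ext_eq_span]
  choose ζ aw hawj hζsm hζmem hζval using fun k => hwG k
  -- the u-family of sections of `ext Λ j`
  set u : (Fin p ⊕ Fin m) → ℝ → W :=
    Sum.elim (fun k s' => iteratedDeriv (aw k) (ζ k) s')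
      (fun k s' => iteratedDeriv (a k) (z k) s') with hu
  set S : Submodule ℝ W :=
    A ⊔ Submodule.span ℝ (Set.range fun k => iteratedDeriv (a k + 1) (z k) t) with hS
  have husm : ∀ k, ContDiff ℝ (⊤ : ℕ∞) (u k) := by
    rintro (k | k)
    · exact contDiff_iteratedDeriv (hζsm k) _
    · exact contDiff_iteratedDeriv (hzsm k) _
  have humem : ∀ k s', u k s' ∈ ext Λ j s' := by
    rintro (k | k) s'
    · exact mem_ext (hζsm k) (hζmem k) ((hawj k).trans (Nat.sub_le j 1)) s'
    · exact mem_ext (hzsm k) (hzmem k) (haj k) s'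
  have hranges : (Set.range fun k => u k t) =
      Set.range w ∪ Set.range (fun k => iteratedDeriv (a k) (z k) t) := by
    have h0 : (fun k => u k t) = Sum.elim (fun k => iteratedDeriv (aw k) (ζ k) t)
        (fun k => iteratedDeriv (a k) (z k) t) := by
      funext k; cases k <;> rfl
    rw [h0, Set.Sum.elim_range]
    have h1 : (fun k => iteratedDeriv (aw k) (ζ k) t) = w := funext hζval
    rw [h1]
  have hspan' : ext Λ j t ≤ Submodule.span ℝ (Set.range fun k => u k t) := by
    rw [hranges, Submodule.span_union, hwmap]
    intro x hx
    have hπx : π x ∈ A.map π := Submodule.mem_map_of_mem hx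
    rw [← hqmap] at hπx
    have hq' : Set.range q = ⇑π '' (Set.range fun k => iteratedDeriv (a k) (z k) t) := by
      rw [← Set.range_comp]
      have h7 : (⇑π ∘ fun k => iteratedDeriv (a k) (z k) t) = q := funext hzπ
      rw [h7]
    rw [hq', ← Submodule.map_span] at hπx
    obtain ⟨y', hy', hπy⟩ := hπx
    have hxk : x - y' ∈ K := by
      have : π (x - y') = 0 := by rw [map_sub, hπy, sub_self]
      rwa [hπ, Submodule.mkQ_apply, Submodule.Quotient.mk_eq_zero] at this
    exact Submodule.mem_sup.2 ⟨x - y', hxk, y', hy', by abel⟩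
  have hdim : ∀ s', finrank ℝ (ext Λ j s') = finrank ℝ (ext Λ j t) := fun s' => hequi j s' t
  have hS1 : ∀ k, u k t ∈ S := fun k => le_sup_left (α := Submodule ℝ W) (humem k t)
  have hS2 : ∀ k, deriv (u k) t ∈ S := by
    rintro (k | k)
    · rw [show u (Sum.inl k) = iteratedDeriv (aw k) (ζ k) from rfl, ← iteratedDeriv_succ]
      have hle : aw k + 1 ≤ j := by have := hawj k; omega
      exact le_sup_left (α := Submodule ℝ W) (mem_ext (hζsm k) (hζmem k) hle t)
    · rw [show u (Sum.inr k) = iteratedDeriv (a k) (z k) from rfl, ← iteratedDeriv_succ]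
      exact le_sup_right (α := Submodule ℝ W)
        (Submodule.subset_span (Set.mem_range_self k))
  -- the extension at the next step is contained in S
  have hextS : ext Λ (j+1) t ≤ S := by
    rw [ext_eq_span]
    refine Submodule.span_le.2 ?_
    rintro v ⟨zz, aa, haa, hzz1, hzz2, rfl⟩
    rcases Nat.lt_or_ge aa (j+1) with hlt | hge
    · have : aa ≤ j := by omega
      exact le_sup_left (α := Submodule ℝ W) (mem_ext hzz1 hzz2 this t)
    · have haaj : aa = j + 1 := le_antisymm haa hge
      subst haaj
      rw [iteratedDeriv_succ]
      exact key (ext Λ j) t u husm humem hspan' hdim (iteratedDeriv j zz)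
        (contDiff_iteratedDeriv hzz1 j) (fun s' => mem_ext hzz1 hzz2 le_rfl s') S hS1 hS2
  -- counting
  have hcount : kdim Λ (j+1) t ≤ kdim Λ j t + m := by
    have h1 : kdim Λ (j+1) t ≤ finrank ℝ S := Submodule.finrank_mono hextS
    have h2 := Submodule.finrank_sup_add_finrank_inf_eq A
      (Submodule.span ℝ (Set.range fun k => iteratedDeriv (a k + 1) (z k) t))
    have h3 : finrank ℝ (Submodule.span ℝ
        (Set.range fun k : Fin m => iteratedDeriv (a k + 1) (z k) t)) ≤ m := by
      have h4 := finrank_span_le_card (R := ℝ)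
        (Set.range fun k : Fin m => iteratedDeriv (a k + 1) (z k) t)
      refine h4.trans ?_
      rw [Set.toFinset_range]
      exact (Finset.card_image_le).trans (by simp)
    have h6 : kdim Λ j t = finrank ℝ A := rfl
    rw [← hS] at h2
    omega
  have hjm : j - 1 + 1 = j := by omega
  omega

end LG
end
end

section
/- Let (M, 𝓔, g) be a sub-Riemannian manifold with compatible connection ∇, adjoint ∇̂, and twist polynomials P_k. Let γ(t) = exp(tp) be a normal geodesic with extremal λ(t). Then: (a) for every vector field X(t) along γ and k ≥ 0, D̂_t (P_k|_{λ(t)} X(t)) = P_k|_{λ(t)} D_t X(t) + P_{k+1}|_{λ(t)} X(t); (b) if //_t and //̂_t : T_{γ(0)}M → T_{γ(t)}M denote parallel transport along γ with respect to ∇ and ∇̂ respectively, then P_k|_p = (d^k/dt^k)( //̂_t^{−1} ∘ //_t )|_{t=0}. -/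
noncomputable section
open scoped RealInnerProductSpace
open Classical

namespace SR

section Aux

variable {n : ℕ}

set_option maxHeartbeats 1000000 in
/-- The Hamiltonian vector field is smooth. -/
lemma SubRiemannian.hamVF_smooth (S : SubRiemannian n) :
    ContDiff ℝ (⊤ : ℕ∞) S.hamVF := by
  have hsharp : ContDiff ℝ (⊤ : ℕ∞) fun z : V n × V n => S.sharp z.1 z.2 :=
    (S.smooth.comp contDiff_fst).clm_apply contDiff_snd
  have hham : ContDiff ℝ (⊤ : ℕ∞) (fun z : V n × V n => S.ham z.1 z.2) := by
    simp only [SubRiemannian.ham]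
    exact (ContDiff.inner ℝ hsharp contDiff_snd).div_const 2
  set J : V n →L[ℝ] V n × V n :=
    (ContinuousLinearMap.id ℝ (V n)).prod (0 : V n →L[ℝ] V n) with hJ
  have key : ∀ z : V n × V n, gradient (fun y => S.ham y z.2) z.1 =
      (InnerProductSpace.toDual ℝ (V n)).symm
        ((fderiv ℝ (fun w : V n × V n => S.ham w.1 w.2) z).comp J) := by
    intro z
    have hD : HasFDerivAt (fun w : V n × V n => S.ham w.1 w.2)
        (fderiv ℝ (fun w : V n × V n => S.ham w.1 w.2) z) z :=
      (hham.differentiable (by simp) z).hasFDerivAt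
    have hJd : HasFDerivAt (fun y : V n => ((y, z.2) : V n × V n)) J z.1 :=
      (hasFDerivAt_id z.1).prodMk (hasFDerivAt_const z.2 z.1)
    have h1 : HasFDerivAt (fun y : V n => S.ham y z.2)
        ((fderiv ℝ (fun w : V n × V n => S.ham w.1 w.2) z).comp J) z.1 := by
      have hD' : HasFDerivAt (fun w : V n × V n => S.ham w.1 w.2)
          (fderiv ℝ (fun w : V n × V n => S.ham w.1 w.2) z) (z.1, z.2) := hD
      exact hD'.comp z.1 hJd
    unfold gradient
    rw [h1.fderiv]
  have hfd : ContDiff ℝ (⊤ : ℕ∞) (fun z : V n × V n =>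
      (fderiv ℝ (fun w : V n × V n => S.ham w.1 w.2) z).comp J) :=
    ContDiff.clm_comp (hham.fderiv_right (by exact_mod_cast le_top)) contDiff_const
  have hgrad : ContDiff ℝ (⊤ : ℕ∞)
      (fun z : V n × V n => gradient (fun y => S.ham y z.2) z.1) := by
    rw [funext key]
    exact (InnerProductSpace.toDual ℝ (V n)).symm.contDiff.comp hfd
  have : S.hamVF = fun z : V n × V n =>
      (S.sharp z.1 z.2, -gradient (fun y => S.ham y z.2) z.1) := rfl
  rw [this]
  exact hsharp.prodMk hgrad.neg

/-- Continuous-linear-map version of the twist polynomials. -/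
def Tk (S : SubRiemannian n) (C : Connection n) : ℕ → V n × V n → (V n →L[ℝ] V n)
  | 0 => fun _ => ContinuousLinearMap.id ℝ (V n)
  | (k+1) => fun z =>
      fderiv ℝ (Tk S C k) z (S.hamVF z)
      + ((C.Γ z.1).flip (S.sharp z.1 z.2)).comp (Tk S C k z)
      - (Tk S C k z).comp (C.Γ z.1 (S.sharp z.1 z.2))

lemma Tk_smooth (S : SubRiemannian n) (C : Connection n)
    (hC : ContDiff ℝ (⊤ : ℕ∞) C.Γ) :
    ∀ k, ContDiff ℝ (⊤ : ℕ∞) (Tk S C k)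
  | 0 => contDiff_const
  | (k+1) => by
    have ih := Tk_smooth S C hC k
    have hsharp : ContDiff ℝ (⊤ : ℕ∞) fun z : V n × V n => S.sharp z.1 z.2 :=
      (S.smooth.comp contDiff_fst).clm_apply contDiff_snd
    have hΓ : ContDiff ℝ (⊤ : ℕ∞) fun z : V n × V n => C.Γ z.1 := hC.comp contDiff_fst
    have h1 : ContDiff ℝ (⊤ : ℕ∞) fun z : V n × V n =>
        fderiv ℝ (Tk S C k) z (S.hamVF z) :=
      (ih.fderiv_right (by exact_mod_cast le_top)).clm_apply S.hamVF_smooth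
    have hflip : ContDiff ℝ (⊤ : ℕ∞) fun z : V n × V n => (C.Γ z.1).flip := by
      have hfl : ContDiff ℝ (⊤:ℕ∞) (fun A : V n →L[ℝ] V n →L[ℝ] V n => A.flip) := by
        apply IsBoundedLinearMap.contDiff
        exact ⟨⟨fun A B => ContinuousLinearMap.flip_add A B,
          fun c A => ContinuousLinearMap.flip_smul c A⟩,
          1, one_pos, fun A => by simp [ContinuousLinearMap.opNorm_flip]⟩
      exact hfl.comp hΓ
    have h2 : ContDiff ℝ (⊤ : ℕ∞) fun z : V n × V n =>
        ((C.Γ z.1).flip (S.sharp z.1 z.2)).comp (Tk S C k z) :=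
      (hflip.clm_apply hsharp).clm_comp ih
    have h3 : ContDiff ℝ (⊤ : ℕ∞) fun z : V n × V n =>
        (Tk S C k z).comp (C.Γ z.1 (S.sharp z.1 z.2)) :=
      ih.clm_comp (hΓ.clm_apply hsharp)
    exact (h1.add h2).sub h3

lemma Tk_eq (S : SubRiemannian n) (C : Connection n)
    (hC : ContDiff ℝ (⊤ : ℕ∞) C.Γ) :
    ∀ k (z : V n × V n) (u : V n), Tk S C k z u = S.twistP C k z u
  | 0, z, u => rfl
  | (k+1), z, u => by
    have ih : ∀ z u, Tk S C k z u = S.twistP C k z u := Tk_eq S C hC k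
    have hfun : (fun w => S.twistP C k w u) = fun w => Tk S C k w u :=
      funext fun w => (ih w u).symm
    have hdiff : DifferentiableAt ℝ (Tk S C k) z :=
      (Tk_smooth S C hC k).differentiable (by simp) z
    have hfd : fderiv ℝ (fun w => Tk S C k w u) z = (fderiv ℝ (Tk S C k) z).flip u := by
      rw [fderiv_clm_apply hdiff (differentiableAt_const u)]
      simp
    show Tk S C (k+1) z u = S.dEnd C (S.twistP C k) z u + S.P1f C z (S.twistP C k z u)
    rw [SubRiemannian.dEnd, hfun, hfd, SubRiemannian.P1f, Connection.tor, ← ih, ← ih]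
    simp only [Tk, ContinuousLinearMap.add_apply, ContinuousLinearMap.sub_apply,
      ContinuousLinearMap.coe_comp', Function.comp_apply, ContinuousLinearMap.flip_apply]
    abel

/-- Chain rule for `Tk` along the extremal. -/
lemma Tk_hasDerivAt (S : SubRiemannian n) (C : Connection n)
    (hC : ContDiff ℝ (⊤ : ℕ∞) C.Γ) (γ pp : ℝ → V n)
    (hext : S.IsExtremalOn γ pp Set.univ) (k : ℕ) (t : ℝ) :
    HasDerivAt (fun s => Tk S C k (γ s, pp s))
      (fderiv ℝ (Tk S C k) (γ t, pp t) (S.hamVF (γ t, pp t))) t := by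
  have hγ := (hext t trivial).1
  have hp := (hext t trivial).2
  have hlam : HasDerivAt (fun s => ((γ s, pp s) : V n × V n)) (S.hamVF (γ t, pp t)) t := by
    have := hγ.prodMk hp
    exact this
  exact ((Tk_smooth S C hC k).differentiable (by simp)
    ((γ t, pp t) : V n × V n)).hasFDerivAt.comp_hasDerivAt t hlam

end Aux

/-!
STATEMENT 8.  For a compatible connection `∇` with adjoint `∇̂` and twist polynomials
`P_k` along a normal geodesic `γ(t) = exp(tp)` with extremal `λ(t) = (γ(t), pp(t))`:
(a) `D̂_t (P_k X) = P_k D_t X + P_{k+1} X` for vector fields `X` along `γ`;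
(b) if `//_t` and `//̂_t` are the parallel transports of `∇` and `∇̂` along `γ`, then
    `P_k|_p = (d^k/dt^k)(//̂_t⁻¹ ∘ //_t)|_{t=0}`.
-/
theorem twist_polynomials_and_parallel_transport
    {n : ℕ} (S : SubRiemannian n) (hbg : S.BracketGenerating)
    (C : Connection n) (hC : ContDiff ℝ (⊤ : ℕ∞) C.Γ) (hcomp : Compatible S C)
    (γ pp : ℝ → V n) (hext : S.IsExtremalOn γ pp Set.univ) :
    -- (a)
    (∀ (X : ℝ → V n), Differentiable ℝ X → ∀ (k : ℕ) (t : ℝ),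
      C.adj.covAlong γ (fun s => S.twistP C k (γ s, pp s) (X s)) t =
        S.twistP C k (γ t, pp t) (C.covAlong γ X t)
          + S.twistP C (k+1) (γ t, pp t) (X t)) ∧
    -- (b)
    (∀ (Pt Pth PthInv : ℝ → (V n →L[ℝ] V n)),
      Pt 0 = ContinuousLinearMap.id ℝ (V n) →
      (∀ t, HasDerivAt Pt (-(C.Γ (γ t) (deriv γ t)).comp (Pt t)) t) →
      Pth 0 = ContinuousLinearMap.id ℝ (V n) →
      (∀ t, HasDerivAt Pth (-((C.Γ (γ t)).flip (deriv γ t)).comp (Pth t)) t) →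
      (∀ t, (PthInv t).comp (Pth t) = ContinuousLinearMap.id ℝ (V n) ∧
            (Pth t).comp (PthInv t) = ContinuousLinearMap.id ℝ (V n)) →
      (∀ t, DifferentiableAt ℝ PthInv t) →
      ∀ (k : ℕ) (v : V n),
        iteratedDeriv k (fun t => (PthInv t).comp (Pt t)) 0 v =
          S.twistP C k (γ 0, pp 0) v) := by
  have hTk := Tk_eq S C hC
  constructor
  · -- part (a)
    intro X hX k t
    have hγ := (hext t trivial).1
    have hdγ : deriv γ t = S.sharp (γ t) (pp t) := hγ.deriv
    have hXd : HasDerivAt X (deriv X t) t := (hX t).hasDerivAt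
    have hZ : HasDerivAt (fun s => Tk S C k (γ s, pp s) (X s))
        (fderiv ℝ (Tk S C k) (γ t, pp t) (S.hamVF (γ t, pp t)) (X t)
          + Tk S C k (γ t, pp t) (deriv X t)) t :=
      (Tk_hasDerivAt S C hC γ pp hext k t).clm_apply hXd
    have hfuneq : (fun s => S.twistP C k (γ s, pp s) (X s))
        = fun s => Tk S C k (γ s, pp s) (X s) := funext fun s => (hTk k _ _).symm
    rw [Connection.covAlong, Connection.covAlong, hfuneq, hZ.deriv, hdγ,
      ← hTk k, ← hTk k, ← hTk (k+1)]
    simp only [Connection.adj, Tk, map_add, ContinuousLinearMap.add_apply,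
      ContinuousLinearMap.sub_apply, ContinuousLinearMap.coe_comp',
      Function.comp_apply, ContinuousLinearMap.flip_apply]
    abel
  · -- part (b)
    intro Pt Pth PthInv hPt0 hPt' hPth0 hPth' hinv hdInv k v
    have hPthInv0 : PthInv 0 = ContinuousLinearMap.id ℝ (V n) := by
      have h := (hinv 0).1
      rw [hPth0, ContinuousLinearMap.comp_id] at h
      exact h
    have key : ∀ k t, iteratedDeriv k (fun t => (PthInv t).comp (Pt t)) t
        = ((PthInv t).comp (Tk S C k (γ t, pp t))).comp (Pt t) := by
      intro k
      induction k with
      | zero =>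
        intro t
        simp [iteratedDeriv_zero, Tk, ContinuousLinearMap.comp_id]
      | succ k ih =>
        intro t
        have hγ := (hext t trivial).1
        have hdγ : deriv γ t = S.sharp (γ t) (pp t) := hγ.deriv
        -- derivative of PthInv
        have hInvD : HasDerivAt PthInv (deriv PthInv t) t := (hdInv t).hasDerivAt
        have hI : HasDerivAt (fun s => (PthInv s).comp (Pth s))
            (0 : V n →L[ℝ] V n) t := by
          have he : (fun s => (PthInv s).comp (Pth s))
              = fun _ => ContinuousLinearMap.id ℝ (V n) := funext fun s => (hinv s).1
          rw [he]
          exact hasDerivAt_const t _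
        have h2 := hInvD.clm_comp (hPth' t)
        have h3 := hI.unique h2
        have hInv' : deriv PthInv t = (PthInv t).comp ((C.Γ (γ t)).flip (deriv γ t)) := by
          have h5 := congrArg (fun A : V n →L[ℝ] V n => A.comp (PthInv t)) h3
          simp only [ContinuousLinearMap.zero_comp, ContinuousLinearMap.add_comp,
            ContinuousLinearMap.comp_assoc, ContinuousLinearMap.comp_neg,
            ContinuousLinearMap.neg_comp, (hinv t).2,
            ContinuousLinearMap.comp_id] at h5
          have h6 := h5.symm
          rwa [add_neg_eq_zero] at h6
        have hA : HasDerivAt PthInv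
            ((PthInv t).comp ((C.Γ (γ t)).flip (deriv γ t))) t := hInv' ▸ hInvD
        have hB := Tk_hasDerivAt S C hC γ pp hext k t
        have hprod := (hA.clm_comp hB).clm_comp (hPt' t)
        rw [iteratedDeriv_succ, funext ih, hprod.deriv]
        simp only [Tk, hdγ]
        simp only [ContinuousLinearMap.comp_add, ContinuousLinearMap.add_comp,
          ContinuousLinearMap.comp_sub, ContinuousLinearMap.sub_comp,
          ContinuousLinearMap.comp_neg, ContinuousLinearMap.neg_comp,
          ContinuousLinearMap.comp_assoc]
        abel
    rw [key k 0, hPt0, hPthInv0, ContinuousLinearMap.comp_id, ContinuousLinearMap.id_comp]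
    exact hTk k _ v

end SR
end
end
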